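/- Let F : J → ℝ be continuous on an interval J, let u : J → ℝ be a twice differentiable, nowhere-vanishing solution of u'' − u'²/(2u) + 2uu' + u³/2 − F(x)·u + 1/(2u) = 0, and let ψ₁, ψ₂ : J → ℝ be twice differentiable solutions of ψ'' = (1/2)(F(x)+1)·ψ. Then on every subinterval where (u² + u' + 1)·ψ₂ − 2u·ψ₂' ≠ 0, the function I₁(x) = ( (u(x)² + u'(x) + 1)·ψ₁(x) − 2u(x)·ψ₁'(x) ) / ( (u(x)² + u'(x) + 1)·ψ₂(x) − 2u(x)·ψ₂'(x) ) has zero derivative, i.e. I₁ is a first integral of the equation. -/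

import Mathlib

/- The Painlevé–Gambier XXVII equation considered is
u'' − u'²/(2u) + 2uu' + u³/2 − F(x)u + 1/(2u) = 0 for a given continuous F.  A first
integral is a function of (x, u, u') that is constant along every solution. -/

/-- if `u` is a nowhere-vanishing solution of the Painlevé–Gambier XXVII
equation and `ψ₁, ψ₂` solve `ψ'' = (1/2)(F+1)ψ`, then wherever
`(u² + u' + 1)ψ₂ − 2uψ₂' ≠ 0` the function
`I₁ = ((u² + u' + 1)ψ₁ − 2uψ₁')/((u² + u' + 1)ψ₂ − 2uψ₂')` has zero derivative,
i.e. `I₁` is a first integral of the equation. -/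
theorem statement15 (J : Set ℝ)
    (F : ℝ → ℝ) (hF : ContinuousOn F J)
    (u u' u'' : ℝ → ℝ)
    (hu : ∀ x ∈ J, HasDerivAt u (u' x) x)
    (hu' : ∀ x ∈ J, HasDerivAt u' (u'' x) x)
    (hu0 : ∀ x ∈ J, u x ≠ 0)
    (hode : ∀ x ∈ J,
      u'' x - (u' x) ^ 2 / (2 * u x) + 2 * u x * u' x + (u x) ^ 3 / 2
        - F x * u x + 1 / (2 * u x) = 0)
    (ψ₁ ψ₂ dψ₁ dψ₂ : ℝ → ℝ)
    (hψ₁ : ∀ x ∈ J, HasDerivAt ψ₁ (dψ₁ x) x)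
    (hψ₁'' : ∀ x ∈ J, HasDerivAt dψ₁ ((1 / 2) * (F x + 1) * ψ₁ x) x)
    (hψ₂ : ∀ x ∈ J, HasDerivAt ψ₂ (dψ₂ x) x)
    (hψ₂'' : ∀ x ∈ J, HasDerivAt dψ₂ ((1 / 2) * (F x + 1) * ψ₂ x) x) :
    ∀ x ∈ J, ((u x) ^ 2 + u' x + 1) * ψ₂ x - 2 * u x * dψ₂ x ≠ 0 →
      HasDerivAt (fun t =>
        (((u t) ^ 2 + u' t + 1) * ψ₁ t - 2 * u t * dψ₁ t) /
          (((u t) ^ 2 + u' t + 1) * ψ₂ t - 2 * u t * dψ₂ t)) 0 x := by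
  intro x hx hD0
  have hu0x := hu0 x hx
  -- derivative of numerator/denominator as generic combinations
  have hNum : HasDerivAt (fun t => ((u t) ^ 2 + u' t + 1) * ψ₁ t - 2 * u t * dψ₁ t)
      ((2 * u x * u' x + u'' x) * ψ₁ x + ((u x) ^ 2 + u' x + 1) * dψ₁ x
        - (2 * u' x * dψ₁ x + 2 * u x * ((1 / 2) * (F x + 1) * ψ₁ x))) x := by
    have h1 := (((hu x hx).pow 2).add (hu' x hx)).add_const 1
    have h2 := (h1.mul (hψ₁ x hx)).sub
      (((hu x hx).const_mul 2).mul (hψ₁'' x hx))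
    exact h2.congr_deriv (by simp only [Pi.add_apply, Pi.pow_apply]; ring)
  have hDen : HasDerivAt (fun t => ((u t) ^ 2 + u' t + 1) * ψ₂ t - 2 * u t * dψ₂ t)
      ((2 * u x * u' x + u'' x) * ψ₂ x + ((u x) ^ 2 + u' x + 1) * dψ₂ x
        - (2 * u' x * dψ₂ x + 2 * u x * ((1 / 2) * (F x + 1) * ψ₂ x))) x := by
    have h1 := (((hu x hx).pow 2).add (hu' x hx)).add_const 1
    have h2 := (h1.mul (hψ₂ x hx)).sub
      (((hu x hx).const_mul 2).mul (hψ₂'' x hx))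
    exact h2.congr_deriv (by simp only [Pi.add_apply, Pi.pow_apply]; ring)
  have hq := hNum.div hDen hD0
  refine hq.congr_deriv ?_
  have heq : 2 * u x * u'' x - (u' x) ^ 2 + 4 * (u x) ^ 2 * u' x + (u x) ^ 4
      - 2 * F x * (u x) ^ 2 + 1 = 0 := by
    have h := hode x hx
    field_simp at h
    have h4 : (4 * u x) * (2 * u x * u'' x - (u' x) ^ 2 + 4 * (u x) ^ 2 * u' x
        + (u x) ^ 4 - 2 * F x * (u x) ^ 2 + 1) = (4 * u x) * 0 := by
      linear_combination (4 * u x) * h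
    exact mul_left_cancel₀ (by simpa using hu0x) h4
  refine (div_eq_zero_iff (G₀ := ℝ)).mpr ?_
  left
  linear_combination (ψ₂ x * dψ₁ x - ψ₁ x * dψ₂ x) * heq
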